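/- Let p, i, j ∈ ℂ with p ≠ 0, and let φ ∈ ℂ[X,Y] satisfy, for all ∂, λ, μ ∈ ℂ: (p∂ + (i+j+p)λ)·φ(∂+λ, μ) = ((i + p/2)λ − pμ)·φ(∂, λ+μ) + (p(∂+μ) + (j + (3/2)p)λ)·φ(∂, μ). Then there exists c ∈ ℂ with φ(x, 0) = c·x for all x ∈ ℂ. -/

import Mathlib

open MvPolynomial

/-- Let `p, i, j ∈ ℂ` with `p ≠ 0`, and let `φ ∈ ℂ[X,Y]` satisfy, for all `∂, λ, μ ∈ ℂ`:
`(p∂ + (i+j+p)λ)·φ(∂+λ, μ)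
  = ((i + p/2)λ − pμ)·φ(∂, λ+μ) + (p(∂+μ) + (j + (3/2)p)λ)·φ(∂, μ)`.
Then there exists `c ∈ ℂ` with `φ(x, 0) = c·x` for all `x ∈ ℂ`. -/
theorem structure_polynomial_phi3 (p i j : ℂ) (hp : p ≠ 0)
    (φ : MvPolynomial (Fin 2) ℂ)
    (hφ : ∀ x l m : ℂ,
      (p * x + (i + j + p) * l) * eval ![x + l, m] φ =
        ((i + p / 2) * l - p * m) * eval ![x, l + m] φ +
          (p * (x + m) + (j + 3 / 2 * p) * l) * eval ![x, m] φ) :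
    ∃ c : ℂ, ∀ x : ℂ, eval ![x, 0] φ = c * x := by
  set P : Polynomial ℂ := MvPolynomial.aeval ![Polynomial.X, 0] φ with hPdef
  have hP : ∀ x : ℂ, P.eval x = eval ![x, 0] φ := by
    intro x
    have h : (Polynomial.aeval x : Polynomial ℂ →ₐ[ℂ] ℂ).comp
        (MvPolynomial.aeval ![Polynomial.X, 0]) = MvPolynomial.aeval ![x, 0] := by
      apply MvPolynomial.algHom_ext; intro k; fin_cases k <;> simp
    have h2 := AlgHom.congr_fun h φ
    simpa using h2
  have hR : ∀ x : ℂ, ∃ R : Polynomial ℂ,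
      (∀ l : ℂ, R.eval l = eval ![x, l] φ) := by
    intro x
    refine ⟨MvPolynomial.aeval ![Polynomial.C x, Polynomial.X] φ, fun l => ?_⟩
    have h : (Polynomial.aeval l : Polynomial ℂ →ₐ[ℂ] ℂ).comp
        (MvPolynomial.aeval ![Polynomial.C x, Polynomial.X]) = MvPolynomial.aeval ![x, l] := by
      apply MvPolynomial.algHom_ext; intro k; fin_cases k <;> simp
    have h2 := AlgHom.congr_fun h φ
    simpa using h2
  -- key ODE: x * P'(x) = P(x)
  have hODE : ∀ x : ℂ, x * P.derivative.eval x = P.eval x := by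
    intro x
    obtain ⟨R, hRe⟩ := hR x
    have hfg : (fun l : ℂ => (p * x + (i + j + p) * l) * P.eval (x + l)) =
        (fun l : ℂ => (i + p / 2) * l * R.eval l
          + (p * x + (j + 3 / 2 * p) * l) * P.eval x) := by
      funext l
      have h := hφ x l 0
      simp only [add_zero, mul_zero, sub_zero] at h
      rw [hP, hP, hRe]
      exact h
    have hf : HasDerivAt (fun l : ℂ => (p * x + (i + j + p) * l) * P.eval (x + l))
        ((i + j + p) * P.eval x + (p * x) * P.derivative.eval x) 0 := by
      have h1 : HasDerivAt (fun l : ℂ => p * x + (i + j + p) * l) (i + j + p) 0 := by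
        simpa using ((hasDerivAt_id (0:ℂ)).const_mul (i + j + p)).const_add (p * x)
      have h2 : HasDerivAt (fun l : ℂ => P.eval (x + l)) (P.derivative.eval x) 0 := by
        have := (P.hasDerivAt (x + 0)).comp 0 ((hasDerivAt_id (0:ℂ)).const_add x)
        simpa [Function.comp_def] using this
      have := h1.mul h2
      simpa [mul_comm, Pi.mul_def] using this
    have hg : HasDerivAt (fun l : ℂ => (i + p / 2) * l * R.eval l
          + (p * x + (j + 3 / 2 * p) * l) * P.eval x)
        ((i + p / 2) * R.eval 0 + (j + 3 / 2 * p) * P.eval x) 0 := by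
      have h1 : HasDerivAt (fun l : ℂ => (i + p / 2) * l) (i + p / 2) 0 := by
        simpa using (hasDerivAt_id (0:ℂ)).const_mul (i + p / 2)
      have h2 := h1.mul (R.hasDerivAt 0)
      have h3 : HasDerivAt (fun l : ℂ => (p * x + (j + 3 / 2 * p) * l) * P.eval x)
          ((j + 3 / 2 * p) * P.eval x) 0 := by
        have h4 : HasDerivAt (fun l : ℂ => p * x + (j + 3 / 2 * p) * l) (j + 3 / 2 * p) 0 := by
          simpa using ((hasDerivAt_id (0:ℂ)).const_mul (j + 3 / 2 * p)).const_add (p * x)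
        simpa using h4.mul_const (P.eval x)
      have := h2.add h3
      simpa [Pi.add_def, Pi.mul_def] using this
    have hg' : HasDerivAt (fun l : ℂ => (p * x + (i + j + p) * l) * P.eval (x + l))
        ((i + p / 2) * R.eval 0 + (j + 3 / 2 * p) * P.eval x) 0 := by
      rw [hfg]; exact hg
    have heq := hf.unique hg'
    have hR0 : R.eval 0 = P.eval x := by rw [hRe, hP]
    rw [hR0] at heq
    have : p * (x * P.derivative.eval x) = p * P.eval x := by ring_nf; linear_combination heq
    exact mul_left_cancel₀ hp this
  -- polynomial identity X * P' = P
  have hkey : Polynomial.X * P.derivative = P := by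
    apply Polynomial.funext
    intro x
    simpa using hODE x
  refine ⟨P.coeff 1, fun x => ?_⟩
  rw [← hP]
  have hPform : P = Polynomial.C (P.coeff 1) * Polynomial.X := by
    ext n
    have hc := congrArg (fun q => Polynomial.coeff q n) hkey
    match n with
    | 0 =>
      have h0 : (Polynomial.X * P.derivative).coeff 0 = 0 := by
        simp [Polynomial.mul_coeff_zero]
      rw [h0] at hc
      simp [← hc]
    | 1 => simp
    | (k+2) =>
      have h2 : (Polynomial.X * P.derivative).coeff (k+2) = P.coeff (k+2) * (k+2) := by
        rw [Polynomial.coeff_X_mul, Polynomial.coeff_derivative]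
        push_cast; ring
      rw [h2] at hc
      have : P.coeff (k+2) * ((k:ℂ)+1) = 0 := by linear_combination hc
      have hk : ((k:ℂ)+1) ≠ 0 := by
        have := Nat.cast_add_one_ne_zero (R := ℂ) k
        simpa using this
      have hz : P.coeff (k+2) = 0 := by
        rcases mul_eq_zero.mp this with h | h
        · exact h
        · exact absurd h hk
      simp [hz, Polynomial.coeff_C_mul]
  conv_lhs => rw [hPform]
  simp
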